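/- Consider the AMSGrad-type iteration in the product of Hilbert spaces described in the context, with N = 1, and suppose in addition that (f_k)_{k≥1} are convex functions on H_1 such that for each k, f_k has gradient g_k^1 at x_k^1 (i.e., f_k is differentiable at x_k^1 with ⟨g_k^1, h⟩ as its derivative in direction h). Then for every n ≥ 1 with α_n > 0 and every x* ∈ X_1: ∑_{k=1}^{n} (f_k(x_k^1) − f_k(x*)) ≤ G D² / (2(1−β_{11}) α_n) + (G² / (2√ε (1−β_{11}))) ∑_{k=1}^{n} α_k + (G D / (1−β_{11})) ∑_{k=1}^{n} β_{1k}. -/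

import Mathlib

set_option maxHeartbeats 1000000

open scoped RealInnerProductSpace

lemma conv_lin {H : Type*} [NormedAddCommGroup H] [InnerProductSpace ℝ H] [CompleteSpace H]
    {f : H → ℝ} (hf : ConvexOn ℝ Set.univ f) {gr x y : H} (hg : HasGradientAt f gr x) :
    f x - f y ≤ ⟪gr, x - y⟫ := by
  set φ : ℝ → ℝ := fun t => f ((AffineMap.lineMap x y : ℝ →ᵃ[ℝ] H) t) with hφdef
  have hφconv : ConvexOn ℝ Set.univ φ := by
    have h := hf.comp_affineMap (AffineMap.lineMap x y : ℝ →ᵃ[ℝ] H)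
    simp only [Set.preimage_univ] at h
    exact h
  have hc : HasDerivAt (fun t : ℝ => (AffineMap.lineMap x y : ℝ →ᵃ[ℝ] H) t) (y - x) 0 := by
    have h1 : HasDerivAt (fun t : ℝ => t • (y - x) + x) ((1:ℝ) • (y - x)) 0 :=
      ((hasDerivAt_id (0:ℝ)).smul_const (y - x)).add_const x
    simpa [AffineMap.lineMap_apply_module'] using h1
  have hder : HasDerivAt φ ⟪gr, y - x⟫ 0 := by
    have h0 : (AffineMap.lineMap x y : ℝ →ᵃ[ℝ] H) (0:ℝ) = x := AffineMap.lineMap_apply_zero x y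
    have hF : HasFDerivAt f (InnerProductSpace.toDual ℝ H gr)
        ((AffineMap.lineMap x y : ℝ →ᵃ[ℝ] H) (0:ℝ)) := by
      rw [h0]; exact hg.hasFDerivAt
    have := hF.comp_hasDerivAt 0 hc
    simp at this
    exact this
  have hs := hφconv.le_slope_of_hasDerivAt (Set.mem_univ 0) (Set.mem_univ 1) zero_lt_one hder
  have hsl : slope φ 0 1 = f y - f x := by
    simp [slope, φ, AffineMap.lineMap_apply_zero, AffineMap.lineMap_apply_one]
  rw [hsl] at hs
  have hneg : ⟪gr, x - y⟫ = -⟪gr, y - x⟫ := by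
    rw [← neg_sub y x, inner_neg_right]
  linarith [hs, hneg.ge]

lemma proj_sq {H : Type*} [NormedAddCommGroup H] [InnerProductSpace ℝ H]
    {X : Set H} (hX : Convex ℝ X) {u y w : H} (hu : u ∈ X) (hw : w ∈ X)
    (hmin : ∀ z ∈ X, ‖u - y‖ ≤ ‖z - y‖) : ‖u - w‖ ^ 2 ≤ ‖y - w‖ ^ 2 := by
  have hne : Nonempty X := ⟨⟨u, hu⟩⟩
  have heq : ‖y - u‖ = ⨅ z : X, ‖y - z‖ := by
    apply le_antisymm
    · apply le_ciInf
      intro z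
      rw [norm_sub_rev y u, norm_sub_rev y z]
      exact hmin z z.2
    · have hbdd : BddBelow (Set.range fun z : X => ‖y - (z : H)‖) :=
        ⟨0, by rintro r ⟨z, rfl⟩; exact norm_nonneg _⟩
      exact ciInf_le hbdd ⟨u, hu⟩
  have hchar := (norm_eq_iInf_iff_real_inner_le_zero hX hu).mp heq
  have h1 : ⟪y - u, w - u⟫ ≤ 0 := hchar w hw
  have hexp : ‖y - w‖ ^ 2 = ‖y - u‖ ^ 2 + 2 * ⟪y - u, u - w⟫ + ‖u - w‖ ^ 2 := by
    have := norm_add_sq_real (y - u) (u - w)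
    simpa [sub_add_sub_cancel] using this
  have h2 : ⟪y - u, u - w⟫ = -⟪y - u, w - u⟫ := by
    rw [← neg_sub w u, inner_neg_right]
  nlinarith [sq_nonneg ‖y - u‖]

/-- A regret bound for convex losses (Hilbert-space analogue of the content of the paper's
Theorem 2), for the AMSGrad-type iteration (Algorithm 1) with `N = 1`: the convex loss
functions `f k` have gradient `g k` at the iterate `x k`, and the linearized bound combined
with convexity yields the regret bound. -/
theorem stmt11 {H : Type*} [NormedAddCommGroup H] [InnerProductSpace ℝ H] [CompleteSpace H]
    (X : Set H) (hXne : X.Nonempty) (hXcl : IsClosed X) (hXcv : Convex ℝ X)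
    (D : ℝ) (hD : 0 ≤ D) (hdiam : ∀ u ∈ X, ∀ v ∈ X, ‖u - v‖ ≤ D)
    (G : ℝ) (hG : 0 ≤ G) (ε : ℝ) (hε : 0 < ε) (hεG : ε ≤ G ^ 2)
    (β₂ : ℝ) (hβ₂ : β₂ ∈ Set.Ico (0 : ℝ) 1)
    (β₁ : ℕ → ℝ) (hβ₁ : ∀ k, 1 ≤ k → β₁ k ∈ Set.Ico (0 : ℝ) 1)
    (hβ₁mono : ∀ k, 1 ≤ k → β₁ (k + 1) ≤ β₁ k)
    (α : ℕ → ℝ) (hα : ∀ k, 1 ≤ k → 0 < α k)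
    (hαβ : ∀ k, 1 ≤ k → α (k + 1) * (1 - β₁ (k + 1)) ≤ α k * (1 - β₁ k))
    (g : ℕ → H) (hg : ∀ k, 1 ≤ k → ‖g k‖ ≤ G)
    (m : ℕ → H) (hm0 : m 0 = 0)
    (hm : ∀ k : ℕ, m (k + 1) = β₁ (k + 1) • m k + (1 - β₁ (k + 1)) • g (k + 1))
    (v : ℕ → ℝ) (hv0 : v 0 = 0)
    (hv : ∀ k : ℕ, v (k + 1) = β₂ * v k + (1 - β₂) * ‖g (k + 1)‖ ^ 2)
    (vhat : ℕ → ℝ) (hvhat0 : vhat 0 = ε)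
    (hvhat : ∀ k : ℕ, vhat (k + 1) = max (vhat k) (v (k + 1)))
    (x : ℕ → H) (hx1 : x 1 ∈ X)
    (hxX : ∀ k, 1 ≤ k → x (k + 1) ∈ X)
    (hxproj : ∀ k, 1 ≤ k → ∀ z ∈ X,
      ‖x (k + 1) - (x k - (α k / Real.sqrt (vhat k)) • m k)‖
        ≤ ‖z - (x k - (α k / Real.sqrt (vhat k)) • m k)‖)
    (f : ℕ → H → ℝ) (hfconv : ∀ k, 1 ≤ k → ConvexOn ℝ Set.univ (f k))
    (hfgrad : ∀ k, 1 ≤ k → HasGradientAt (f k) (g k) (x k))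
    (n : ℕ) (hn : 1 ≤ n) (xs : H) (hxs : xs ∈ X) :
    ∑ k ∈ Finset.Icc 1 n, (f k (x k) - f k xs)
      ≤ G * D ^ 2 / (2 * (1 - β₁ 1) * α n)
        + (G ^ 2 / (2 * Real.sqrt ε * (1 - β₁ 1))) * ∑ k ∈ Finset.Icc 1 n, α k
        + (G * D / (1 - β₁ 1)) * ∑ k ∈ Finset.Icc 1 n, β₁ k := by
  set s := Real.sqrt ε with hsdef
  have hs : 0 < s := Real.sqrt_pos.mpr hε
  have hβIco : ∀ k : ℕ, β₁ (k + 1) ∈ Set.Ico (0:ℝ) 1 := fun k => hβ₁ (k + 1) (Nat.le_add_left 1 k)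
  have hc1 : 0 < 1 - β₁ 1 := by have := (hβ₁ 1 le_rfl).2; linarith
  have hcpos : ∀ k, 1 ≤ k → 0 < 1 - β₁ k := fun k hk => by have := (hβ₁ k hk).2; linarith
  -- bound on m
  have hmb : ∀ k, ‖m k‖ ≤ G := by
    intro k
    induction k with
    | zero => simp [hm0, hG]
    | succ k ih =>
      rw [hm k]
      have h1 := (hβIco k).1
      have h2 := (hβIco k).2
      have h3 := hg (k + 1) (Nat.le_add_left 1 k)
      calc ‖β₁ (k+1) • m k + (1 - β₁ (k+1)) • g (k+1)‖
          ≤ ‖β₁ (k+1) • m k‖ + ‖(1 - β₁ (k+1)) • g (k+1)‖ := norm_add_le _ _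
        _ = β₁ (k+1) * ‖m k‖ + (1 - β₁ (k+1)) * ‖g (k+1)‖ := by
            rw [norm_smul, norm_smul, Real.norm_eq_abs, Real.norm_eq_abs,
              abs_of_nonneg h1, abs_of_nonneg (by linarith)]
        _ ≤ β₁ (k+1) * G + (1 - β₁ (k+1)) * G :=
            add_le_add (mul_le_mul_of_nonneg_left ih h1)
              (mul_le_mul_of_nonneg_left h3 (by linarith))
        _ = G := by ring
  -- bound on v
  have hvb : ∀ k, v k ≤ G ^ 2 := by
    intro k
    induction k with
    | zero => rw [hv0]; nlinarith
    | succ k ih =>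
      rw [hv k]
      have h3 : ‖g (k+1)‖ ^ 2 ≤ G ^ 2 :=
        pow_le_pow_left₀ (norm_nonneg _) (hg (k + 1) (Nat.le_add_left 1 k)) 2
      nlinarith [hβ₂.1, hβ₂.2]
  have hvhat_lb : ∀ k, ε ≤ vhat k := by
    intro k
    induction k with
    | zero => rw [hvhat0]
    | succ k ih => rw [hvhat k]; exact le_trans ih (le_max_left _ _)
  have hvhat_ub : ∀ k, vhat k ≤ G ^ 2 := by
    intro k
    induction k with
    | zero => rw [hvhat0]; exact hεG
    | succ k ih => rw [hvhat k]; exact max_le ih (hvb (k+1))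
  have hsq_lb : ∀ k, s ≤ Real.sqrt (vhat k) := fun k => Real.sqrt_le_sqrt (hvhat_lb k)
  have hsq_pos : ∀ k, 0 < Real.sqrt (vhat k) := fun k => lt_of_lt_of_le hs (hsq_lb k)
  have hsq_ub : ∀ k, Real.sqrt (vhat k) ≤ G := by
    intro k
    calc Real.sqrt (vhat k) ≤ Real.sqrt (G ^ 2) := Real.sqrt_le_sqrt (hvhat_ub k)
      _ = G := Real.sqrt_sq hG
  have hvhat_mono : ∀ k, vhat k ≤ vhat (k+1) := fun k => (hvhat k) ▸ le_max_left _ _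
  clear_value s
  have hxmem : ∀ k, 1 ≤ k → x k ∈ X := by
    intro k hk
    obtain ⟨j, rfl⟩ : ∃ j, k = j + 1 := ⟨k - 1, by omega⟩
    cases j with
    | zero => exact hx1
    | succ j => exact hxX (j+1) (by omega)
  have hβ₁le1 : ∀ k, 1 ≤ k → β₁ k ≤ β₁ 1 := by
    intro k hk
    induction k, hk using Nat.le_induction with
    | base => exact le_rfl
    | succ k hk ih => exact le_trans (hβ₁mono k hk) ih
  set Δ : ℕ → ℝ := fun k => ‖x k - xs‖ ^ 2 with hΔdef
  have hΔ0 : ∀ k, 0 ≤ Δ k := fun k => sq_nonneg _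
  have hΔle : ∀ k, 1 ≤ k → Δ k ≤ D ^ 2 := by
    intro k hk
    simp only [hΔdef]
    exact pow_le_pow_left₀ (norm_nonneg _) (hdiam _ (hxmem k hk) _ hxs) 2
  set b : ℕ → ℝ := fun k => Real.sqrt (vhat k) / (2 * α k * (1 - β₁ k)) with hbdef
  have hbpos : ∀ k, 1 ≤ k → 0 < b k := by
    intro k hk
    simp only [hbdef]
    exact div_pos (hsq_pos k) (mul_pos (mul_pos two_pos (hα k hk)) (hcpos k hk))
  have hbmono : ∀ k, 1 ≤ k → b k ≤ b (k+1) := by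
    intro k hk
    have h1 : 0 < α (k+1) * (1 - β₁ (k+1)) := mul_pos (hα _ (by omega)) (hcpos _ (by omega))
    have h2 := hαβ k hk
    have h3 := Real.sqrt_le_sqrt (hvhat_mono k)
    simp only [hbdef]
    exact div_le_div₀ (Real.sqrt_nonneg _) h3 (by linarith) (by nlinarith)
  clear_value Δ b
  -- per-step bound
  have hstep : ∀ k, 1 ≤ k → f k (x k) - f k xs ≤ b k * (Δ k - Δ (k+1))
      + G ^ 2 / (2 * s * (1 - β₁ 1)) * α k + G * D / (1 - β₁ 1) * β₁ k := by
    intro k hk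
    obtain ⟨j, rfl⟩ : ∃ j, k = j + 1 := ⟨k - 1, by omega⟩
    set η := α (j+1) / Real.sqrt (vhat (j+1)) with hηdef
    have hη : 0 < η := div_pos (hα _ hk) (hsq_pos _)
    clear_value η
    have hc : 0 < 1 - β₁ (j+1) := hcpos _ hk
    have hcc : 1 - β₁ 1 ≤ 1 - β₁ (j+1) := by have := hβ₁le1 _ hk; linarith
    have hβnn : 0 ≤ β₁ (j+1) := (hβ₁ _ hk).1
    have hαpos := hα (j+1) hk
    have hm2 : ‖m (j+1)‖ ^ 2 ≤ G ^ 2 := pow_le_pow_left₀ (norm_nonneg _) (hmb (j+1)) 2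
    have hdD : ‖x (j+1) - xs‖ ≤ D := hdiam _ (hxmem _ hk) _ hxs
    have hinner_m : |⟪x (j+1) - xs, m j⟫| ≤ G * D := by
      calc |⟪x (j+1) - xs, m j⟫| ≤ ‖x (j+1) - xs‖ * ‖m j‖ := abs_real_inner_le_norm _ _
        _ ≤ D * G := mul_le_mul hdD (hmb j) (norm_nonneg _) hD
        _ = G * D := mul_comm D G
    -- projection step
    have I1 : Δ (j+1+1) ≤ Δ (j+1) - 2 * η * ⟪x (j+1) - xs, m (j+1)⟫
        + η ^ 2 * ‖m (j+1)‖ ^ 2 := by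
      have hproj := proj_sq hXcv (hxX (j+1) hk) hxs (hxproj (j+1) hk)
      have hexp : ‖(x (j+1) - (α (j+1) / Real.sqrt (vhat (j+1))) • m (j+1)) - xs‖ ^ 2
          = ‖x (j+1) - xs‖ ^ 2
            - 2 * (α (j+1) / Real.sqrt (vhat (j+1))) * ⟪x (j+1) - xs, m (j+1)⟫
            + (α (j+1) / Real.sqrt (vhat (j+1))) ^ 2 * ‖m (j+1)‖ ^ 2 := by
        rw [sub_right_comm, norm_sub_sq_real, real_inner_smul_right, norm_smul,
          Real.norm_eq_abs, mul_pow, sq_abs]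
        ring
      simp only [hΔdef, hηdef]
      linarith [hproj, hexp.le, hexp.ge]
    have I3 : f (j+1) (x (j+1)) - f (j+1) xs ≤ ⟪x (j+1) - xs, g (j+1)⟫ := by
      have := conv_lin (y := xs) (hfconv _ hk) (hfgrad _ hk)
      rwa [real_inner_comm] at this
    have e4' : 2 * η * ⟪x (j+1) - xs, m (j+1)⟫
        = 2 * η * (β₁ (j+1) * ⟪x (j+1) - xs, m j⟫)
          + 2 * η * ((1 - β₁ (j+1)) * ⟪x (j+1) - xs, g (j+1)⟫) := by
      rw [hm j, inner_add_right, real_inner_smul_right, real_inner_smul_right]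
      ring
    have e1 : η ^ 2 * ‖m (j+1)‖ ^ 2 ≤ η ^ 2 * G ^ 2 :=
      mul_le_mul_of_nonneg_left hm2 (sq_nonneg η)
    have e2 : -(G * D) ≤ ⟪x (j+1) - xs, m j⟫ := (abs_le.mp hinner_m).1
    have e5 : 0 ≤ 2 * η * β₁ (j+1) * (⟪x (j+1) - xs, m j⟫ + G * D) :=
      mul_nonneg (mul_nonneg (mul_nonneg two_pos.le hη.le) hβnn) (by linarith)
    have hT1 : 2 * η * ((1 - β₁ (j+1)) * ⟪x (j+1) - xs, g (j+1)⟫)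
        ≤ (Δ (j+1) - Δ (j+1+1)) + η ^ 2 * G ^ 2 + 2 * η * β₁ (j+1) * (G * D) := by
      nlinarith [I1, e4', e1, e5]
    -- key identity
    have hkey : 2 * η * ((1 - β₁ (j+1)) * b (j+1)) = 1 := by
      have hne1 : Real.sqrt (vhat (j+1)) ≠ 0 := (hsq_pos _).ne'
      have hne2 : α (j+1) ≠ 0 := hαpos.ne'
      have hne3 : (1 - β₁ (j+1)) ≠ 0 := hc.ne'
      simp only [hbdef, hηdef]
      field_simp
    -- A-term bound
    have h2' : η * s ≤ α (j+1) := by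
      rw [hηdef, div_mul_eq_mul_div, div_le_iff₀ (hsq_pos _)]
      exact mul_le_mul_of_nonneg_left (hsq_lb _) hαpos.le
    have hA2 : η * (s * (1 - β₁ 1)) ≤ (1 - β₁ (j+1)) * α (j+1) := by
      have t1 : 0 ≤ (α (j+1) - η * s) * (1 - β₁ 1) := mul_nonneg (by linarith) hc1.le
      have t2 : 0 ≤ α (j+1) * ((1 - β₁ (j+1)) - (1 - β₁ 1)) := mul_nonneg hαpos.le (by linarith)
      nlinarith [t1, t2]
    have h6 : η ≤ ((1 - β₁ (j+1)) * α (j+1)) / (s * (1 - β₁ 1)) :=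
      (le_div_iff₀ (mul_pos hs hc1)).mpr hA2
    have hA3 : η ^ 2 * G ^ 2
        ≤ 2 * η * (1 - β₁ (j+1)) * (G ^ 2 / (2 * s * (1 - β₁ 1)) * α (j+1)) := by
      have hmm : η * η ≤ η * (((1 - β₁ (j+1)) * α (j+1)) / (s * (1 - β₁ 1))) :=
        mul_le_mul_of_nonneg_left h6 hη.le
      have hmm2 := mul_le_mul_of_nonneg_right hmm (sq_nonneg G)
      calc η ^ 2 * G ^ 2 = η * η * G ^ 2 := by ring
        _ ≤ η * (((1 - β₁ (j+1)) * α (j+1)) / (s * (1 - β₁ 1))) * G ^ 2 := hmm2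
        _ = 2 * η * (1 - β₁ (j+1)) * (G ^ 2 / (2 * s * (1 - β₁ 1)) * α (j+1)) := by
            field_simp
    -- B-term bound
    have hGD : 0 ≤ G * D := mul_nonneg hG hD
    have h7 : G * D ≤ (1 - β₁ (j+1)) * (G * D / (1 - β₁ 1)) := by
      rw [← mul_div_assoc, le_div_iff₀ hc1]
      nlinarith [mul_nonneg hGD (sub_nonneg.mpr hcc)]
    have h8 : 0 ≤ 2 * η * β₁ (j+1) := mul_nonneg (mul_nonneg two_pos.le hη.le) hβnn
    have hB3 : 2 * η * β₁ (j+1) * (G * D)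
        ≤ 2 * η * (1 - β₁ (j+1)) * (G * D / (1 - β₁ 1) * β₁ (j+1)) := by
      calc 2 * η * β₁ (j+1) * (G * D)
          ≤ 2 * η * β₁ (j+1) * ((1 - β₁ (j+1)) * (G * D / (1 - β₁ 1))) :=
            mul_le_mul_of_nonneg_left h7 h8
        _ = 2 * η * (1 - β₁ (j+1)) * (G * D / (1 - β₁ 1) * β₁ (j+1)) := by ring
    -- combine
    have hpos2 : 0 < 2 * η * (1 - β₁ (j+1)) := mul_pos (mul_pos two_pos hη) hc
    apply le_of_mul_le_mul_left _ hpos2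
    have hgF : 2 * η * (1 - β₁ (j+1)) * (f (j+1) (x (j+1)) - f (j+1) xs)
        ≤ 2 * η * (1 - β₁ (j+1)) * ⟪x (j+1) - xs, g (j+1)⟫ :=
      mul_le_mul_of_nonneg_left I3 hpos2.le
    have hRHSeq : 2 * η * (1 - β₁ (j+1)) * (b (j+1) * (Δ (j+1) - Δ (j+1+1)))
        = Δ (j+1) - Δ (j+1+1) := by
      calc 2 * η * (1 - β₁ (j+1)) * (b (j+1) * (Δ (j+1) - Δ (j+1+1)))
          = (2 * η * ((1 - β₁ (j+1)) * b (j+1))) * (Δ (j+1) - Δ (j+1+1)) := by ring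
        _ = 1 * (Δ (j+1) - Δ (j+1+1)) := by rw [hkey]
        _ = Δ (j+1) - Δ (j+1+1) := one_mul _
    nlinarith [hgF, hT1, hRHSeq, hA3, hB3]
  -- sum up
  have hsum0 : ∑ k ∈ Finset.Icc 1 n, (f k (x k) - f k xs)
      ≤ ∑ k ∈ Finset.Icc 1 n, (b k * (Δ k - Δ (k+1))
        + G ^ 2 / (2 * s * (1 - β₁ 1)) * α k + G * D / (1 - β₁ 1) * β₁ k) :=
    Finset.sum_le_sum (fun k hk => hstep k (Finset.mem_Icc.mp hk).1)
  have hsplit : ∑ k ∈ Finset.Icc 1 n, (b k * (Δ k - Δ (k+1))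
        + G ^ 2 / (2 * s * (1 - β₁ 1)) * α k + G * D / (1 - β₁ 1) * β₁ k)
      = (∑ k ∈ Finset.Icc 1 n, b k * (Δ k - Δ (k+1)))
        + G ^ 2 / (2 * s * (1 - β₁ 1)) * (∑ k ∈ Finset.Icc 1 n, α k)
        + G * D / (1 - β₁ 1) * (∑ k ∈ Finset.Icc 1 n, β₁ k) := by
    rw [Finset.sum_add_distrib, Finset.sum_add_distrib, ← Finset.mul_sum, ← Finset.mul_sum]
  have htel : ∀ N, 1 ≤ N → ∑ k ∈ Finset.Icc 1 N, b k * (Δ k - Δ (k+1))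
      ≤ b N * D ^ 2 - b N * Δ (N+1) := by
    intro N hN
    induction N, hN using Nat.le_induction with
    | base =>
      rw [Finset.Icc_self, Finset.sum_singleton]
      nlinarith [mul_nonneg (hbpos 1 le_rfl).le (sub_nonneg.mpr (hΔle 1 le_rfl))]
    | succ N hN ih =>
      rw [Finset.sum_Icc_succ_top (by omega : 1 ≤ N + 1)]
      have h1 := hbmono N hN
      have h2 := hΔle (N+1) (by omega)
      nlinarith [ih, mul_nonneg (sub_nonneg.mpr h1) (sub_nonneg.mpr h2)]
  have hlast : b n * D ^ 2 - b n * Δ (n+1) ≤ G * D ^ 2 / (2 * (1 - β₁ 1) * α n) := by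
    have h1 : 0 ≤ b n * Δ (n+1) := mul_nonneg (hbpos n hn).le (hΔ0 _)
    have h2 : b n ≤ G / (2 * (1 - β₁ 1) * α n) := by
      simp only [hbdef]
      exact div_le_div₀ hG (hsq_ub n) (mul_pos (mul_pos two_pos hc1) (hα n hn))
        (by nlinarith [mul_nonneg (hα n hn).le (sub_nonneg.mpr (hβ₁le1 n hn))])
    calc b n * D ^ 2 - b n * Δ (n+1) ≤ b n * D ^ 2 := by linarith
      _ ≤ G / (2 * (1 - β₁ 1) * α n) * D ^ 2 := mul_le_mul_of_nonneg_right h2 (sq_nonneg D)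
      _ = G * D ^ 2 / (2 * (1 - β₁ 1) * α n) := by ring
  calc ∑ k ∈ Finset.Icc 1 n, (f k (x k) - f k xs)
      ≤ (∑ k ∈ Finset.Icc 1 n, b k * (Δ k - Δ (k+1)))
        + G ^ 2 / (2 * s * (1 - β₁ 1)) * (∑ k ∈ Finset.Icc 1 n, α k)
        + G * D / (1 - β₁ 1) * (∑ k ∈ Finset.Icc 1 n, β₁ k) := by
        rw [← hsplit]; exact hsum0
    _ ≤ G * D ^ 2 / (2 * (1 - β₁ 1) * α n)
        + G ^ 2 / (2 * s * (1 - β₁ 1)) * (∑ k ∈ Finset.Icc 1 n, α k)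
        + G * D / (1 - β₁ 1) * (∑ k ∈ Finset.Icc 1 n, β₁ k) := by
        have := htel n hn
        linarith [hlast]
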